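/- Let S ⊆ ℝ^N and let P : ℝ^N → S be a map with range contained in S satisfying ⟨z − P(x), x − P(x)⟩ ≤ 0 for all x ∈ ℝ^N and all z ∈ S. Then S is convex. -/

import Mathlib

open scoped RealInnerProductSpace

/-- If a map `P : ℝ^N → S` satisfies the global obtuse-angle condition
`⟪z - P x, x - P x⟫ ≤ 0` for all `x` and all `z ∈ S`, then `S` is convex. -/
theorem global_obtuse_angle_implies_convex
    {N : ℕ} (S : Set (EuclideanSpace ℝ (Fin N)))
    (P : EuclideanSpace ℝ (Fin N) → EuclideanSpace ℝ (Fin N))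
    (hPS : ∀ x, P x ∈ S)
    (hglobal : ∀ x : EuclideanSpace ℝ (Fin N), ∀ z ∈ S, (inner ℝ (z - P x) (x - P x) : ℝ) ≤ 0) :
    Convex ℝ S := by
  intro a ha b hb s t hs ht hst
  set x : EuclideanSpace ℝ (Fin N) := s • a + t • b with hxdef
  have hdecomp : x - P x = s • (a - P x) + t • (b - P x) := by
    rw [hxdef, show s • (a - P x) + t • (b - P x)
      = s • a + t • b - (s + t) • P x from by module, hst, one_smul]
  have hnorm : (inner ℝ (x - P x) (x - P x) : ℝ) ≤ 0 := by
    calc (inner ℝ (x - P x) (x - P x) : ℝ)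
        = s * inner ℝ (a - P x) (x - P x) + t * inner ℝ (b - P x) (x - P x) := by
          nth_rewrite 1 [hdecomp]
          rw [inner_add_left, real_inner_smul_left, real_inner_smul_left]
      _ ≤ 0 := by
          have h1 := hglobal x a ha
          have h2 := hglobal x b hb
          nlinarith
  have hx0 : x - P x = 0 := by
    have := real_inner_self_nonneg (x := x - P x)
    have : (inner ℝ (x - P x) (x - P x) : ℝ) = 0 := le_antisymm hnorm this
    exact inner_self_eq_zero.mp this
  have : x = P x := by rwa [sub_eq_zero] at hx0
  rw [this]
  exact hPS x
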